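/- In the double D~ of the Jordan plane, for all n ≥ 1: v x^n = x^n v + n x^{n−1}(1 − g) + n x^n u. -/
import Mathlib


/-- In the double `D~` of the Jordan plane (char `≠ 2`; universally, in any algebra with
elements satisfying the defining relations of Proposition 2.3), for all `n ≥ 1`:
`v x^n = x^n v + n x^{n-1}(1 - g) + n x^n u`. -/
theorem stmt11 (K : Type*) [Field K] (h2 : (2 : K) ≠ 0)
    (A : Type*) [Ring A] [Algebra K A] (u v z g g' x y : A)
    (hgx : g * x = x * g) (hgy : g * y = y * g + x * g)
    (hyx : y * x = x * y - (1/2 : K) • x ^ 2)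
    (hgg' : g * g' = 1) (hg'g : g' * g = 1)
    (hvz : v * z = z * v + v) (huz : u * z = z * u + u)
    (hvu : v * u = u * v - (1/2 : K) • u ^ 2)
    (hzy : z * y = y * z + y) (hzx : z * x = x * z + x)
    (hvg : v * g = g * v + g * u) (hug : u * g = g * u)
    (hvx : v * x = x * v + (1 - g) + x * u) (hux : u * x = x * u)
    (huy : u * y = y * u + (1 - g)) (hvy : v * y = y * v - g * z + y * u)
    (hzg : z * g = g * z)
    (n : ℕ) (hn : 1 ≤ n) :
    v * x ^ n = x ^ n * v + (n : K) • (x ^ (n - 1) * (1 - g)) + (n : K) • (x ^ n * u) := by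
  induction n with
  | zero => omega
  | succ m ih =>
    rcases Nat.eq_zero_or_pos m with hm | hm
    · subst hm
      simpa using hvx
    · have hxg : (1 - g) * x = x * (1 - g) := by
        rw [sub_mul, mul_sub, one_mul, mul_one, hgx]
      have key := ih hm
      have hsucc : x ^ (m + 1) = x ^ m * x := pow_succ x m
      calc v * x ^ (m + 1) = (v * x ^ m) * x := by rw [hsucc, mul_assoc]
        _ = (x ^ m * v + (m : K) • (x ^ (m - 1) * (1 - g)) + (m : K) • (x ^ m * u)) * x := by
            rw [key]
        _ = x ^ m * (v * x) + (m : K) • (x ^ (m - 1) * ((1 - g) * x))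
              + (m : K) • (x ^ m * (u * x)) := by
            rw [add_mul, add_mul, smul_mul_assoc, smul_mul_assoc, mul_assoc, mul_assoc,
              mul_assoc]
        _ = x ^ m * (x * v + (1 - g) + x * u) + (m : K) • (x ^ (m - 1) * (x * (1 - g)))
              + (m : K) • (x ^ m * (x * u)) := by rw [hvx, hxg, hux]
        _ = x ^ (m + 1) * v + ((m : K) + 1) • (x ^ m * (1 - g))
              + ((m : K) + 1) • (x ^ (m + 1) * u) := by
            have h1 : x ^ (m - 1) * x = x ^ m := by
              rw [← pow_succ]; congr 1; omega
            rw [add_smul, add_smul, one_smul, one_smul, ← mul_assoc, ← mul_assoc, h1,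
              ← pow_succ, mul_add, mul_add, ← mul_assoc, ← pow_succ,
              show x ^ m * (x * u) = x ^ (m + 1) * u by rw [← mul_assoc, ← pow_succ]]
            abel
        _ = x ^ (m + 1) * v + ((m + 1 : ℕ) : K) • (x ^ (m + 1 - 1) * (1 - g))
              + ((m + 1 : ℕ) : K) • (x ^ (m + 1) * u) := by
            push_cast
            simp
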